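/- Suppose P is the uniform distribution on A (P_i = 1/k for all i) and ρ is a permutation distortion measure. Then for every D ∈ (0, D_max), the degeneracy condition holds at D; moreover it holds with Q* equal to the uniform distribution on A, i.e., the uniform distribution Q* satisfies R(P,Q*,D) = R(D), and there exists λ* < 0 with Λ'_{P,Q*}(λ*) = D, λ*·D − Λ_{P,Q*}(λ*) = (ln 2)·R(D), and Σ_j (1/k)·e^{λ*·ρ_ij} taking the same value for every i ∈ {1,…,k}. -/

import Mathlib

open Real Finset

/-- `Q` is a probability mass function on `Fin k`. -/
def IsPmf {k : ℕ} (Q : Fin k → ℝ) : Prop := (∀ j, 0 ≤ Q j) ∧ ∑ j, Q j = 1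

/-- `Λ_{P,Q}(λ) = Σ_i P_i · ln (Σ_j Q_j e^{λ ρ_ij})`. -/
noncomputable def Lam {k : ℕ} (P : Fin k → ℝ) (ρ : Fin k → Fin k → ℝ)
    (Q : Fin k → ℝ) (l : ℝ) : ℝ :=
  ∑ i, P i * Real.log (∑ j, Q j * Real.exp (l * ρ i j))

/-- The cost `Σ_{i,j} P_i W_ij log₂ (W_ij / Q_j)` of a transition matrix `W`, with the
conventions `0 · log 0 = 0` (automatic in Lean since `Real.log 0 = 0`) and value `⊤`
if `W i j > 0` for some `j` with `Q j = 0`. -/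
noncomputable def wCost {k : ℕ} (P Q : Fin k → ℝ) (W : Fin k → Fin k → ℝ) : EReal :=
  if ∀ i j, 0 < W i j → 0 < Q j then
    (((∑ i, ∑ j, P i * W i j * Real.logb 2 (W i j / Q j)) : ℝ) : EReal)
  else ⊤

/-- `R(P,Q,D)`: infimum over row-stochastic matrices `W` with
`Σ_{i,j} P_i W_ij ρ_ij ≤ D` of the relative-entropy cost. -/
noncomputable def RPQ {k : ℕ} (P : Fin k → ℝ) (ρ : Fin k → Fin k → ℝ)
    (Q : Fin k → ℝ) (D : ℝ) : EReal :=
  ⨅ W ∈ {W : Fin k → Fin k → ℝ | (∀ i j, 0 ≤ W i j) ∧ (∀ i, ∑ j, W i j = 1) ∧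
      ∑ i, ∑ j, P i * W i j * ρ i j ≤ D}, wCost P Q W

/-- The rate-distortion function `R(D) = inf_Q R(P,Q,D)`. -/
noncomputable def RofD {k : ℕ} (P : Fin k → ℝ) (ρ : Fin k → Fin k → ℝ) (D : ℝ) : EReal :=
  ⨅ Q ∈ {Q : Fin k → ℝ | IsPmf Q}, RPQ P ρ Q D

/-- `D_max = min_j Σ_i P_i ρ_ij`. -/
noncomputable def Dmax {k : ℕ} (P : Fin k → ℝ) (ρ : Fin k → Fin k → ℝ) : ℝ :=
  sInf (Set.range fun j => ∑ i, P i * ρ i j)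

/-- `ρ` is a permutation distortion measure: all rows of `(ρ_ij)` are permutations
of one another. -/
def IsPermMeasure {k : ℕ} (ρ : Fin k → Fin k → ℝ) : Prop :=
  ∀ i i' : Fin k, ∃ σ : Equiv.Perm (Fin k), ∀ j, ρ i' j = ρ i (σ j)

/-- The degeneracy condition at distortion level `D`: there are a pmf `Q*` achieving
`R(P,Q*,D) = R(D)` and `λ* < 0` with `Λ'_{P,Q*}(λ*) = D`,
`λ*·D − Λ_{P,Q*}(λ*) = (ln 2)·R(D)`, and `Σ_j Q*_j e^{λ* ρ_ij}` independent of `i`. -/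
def DegenAt {k : ℕ} (P : Fin k → ℝ) (ρ : Fin k → Fin k → ℝ) (D : ℝ) : Prop :=
  ∃ Q : Fin k → ℝ, IsPmf Q ∧ RPQ P ρ Q D = RofD P ρ D ∧
    ∃ l : ℝ, l < 0 ∧ HasDerivAt (Lam P ρ Q) D l ∧
      ((l * D - Lam P ρ Q l : ℝ) : EReal) = (Real.log 2 : EReal) * RofD P ρ D ∧
      ∃ c : ℝ, ∀ i, ∑ j, Q j * Real.exp (l * ρ i j) = c

lemma aux_log_le {x B : ℝ} (hx : 0 < x) (hB : 0 < B) :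
    Real.log x ≤ Real.log B + (x / B - 1) := by
  have h := Real.log_le_sub_one_of_pos (div_pos hx hB)
  rw [Real.log_div (ne_of_gt hx) (ne_of_gt hB)] at h
  linarith

lemma aux_gibbs {k : ℕ} (w m : Fin k → ℝ) (hw : ∀ j, 0 ≤ w j) (hw1 : ∑ j, w j = 1)
    (hwm : ∀ j, 0 < w j → 0 < m j) (hm : ∀ j, 0 ≤ m j) (hS : 0 < ∑ j, m j) :
    -Real.log (∑ j, m j) ≤ ∑ j, w j * Real.log (w j / m j) := by
  set S := ∑ j, m j with hSdef
  have key : ∀ j, w j - m j / S - w j * Real.log S ≤ w j * Real.log (w j / m j) := by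
    intro j
    rcases eq_or_lt_of_le (hw j) with h | h
    · rw [← h]
      have : (0:ℝ) ≤ m j / S := div_nonneg (hm j) (le_of_lt hS)
      simp
      linarith
    · have hmj := hwm j h
      have h1 : Real.log (w j / m j) = Real.log (w j) - Real.log (m j) :=
        Real.log_div (ne_of_gt h) (ne_of_gt hmj)
      have h2 := Real.log_le_sub_one_of_pos (show 0 < m j / (w j * S) by positivity)
      rw [Real.log_div (ne_of_gt hmj) (by positivity),
        Real.log_mul (ne_of_gt h) (ne_of_gt hS)] at h2
      have h3 : w j * (Real.log (m j) - (Real.log (w j) + Real.log S))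
          ≤ w j * (m j / (w j * S) - 1) := mul_le_mul_of_nonneg_left h2 (le_of_lt h)
      have h4 : w j * (m j / (w j * S)) = m j / S := by
        field_simp
      rw [h1]
      nlinarith [h3, h4]
  have hsum := Finset.sum_le_sum (fun j (_ : j ∈ Finset.univ) => key j)
  have e1 : ∑ j, (w j - m j / S - w j * Real.log S) = 1 - 1 - Real.log S := by
    rw [Finset.sum_sub_distrib, Finset.sum_sub_distrib, ← Finset.sum_div, ← Finset.sum_mul,
      hw1, ← hSdef]
    rw [div_self (ne_of_gt hS), one_mul]
  rw [e1] at hsum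
  linarith

/-- **Theorem 1(a).** If `P` is uniform on `A` and `ρ` is a permutation distortion
measure, then for every `D ∈ (0, D_max)` the degeneracy condition holds at `D`,
witnessed by the uniform `Q*`. -/
theorem stmt_0 {k : ℕ} (hk : 2 ≤ k)
    (P : Fin k → ℝ) (ρ : Fin k → Fin k → ℝ)
    (hP : IsPmf P) (hPpos : ∀ i, 0 < P i)
    (hρnn : ∀ i j, 0 ≤ ρ i j) (hρsym : ∀ i j, ρ i j = ρ j i)
    (hρzero : ∀ i j, ρ i j = 0 ↔ i = j)
    (hDmax : 0 < Dmax P ρ)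
    (hunif : ∀ i, P i = 1 / (k : ℝ))
    (hperm : IsPermMeasure ρ) :
    ∀ D : ℝ, 0 < D → D < Dmax P ρ →
      DegenAt P ρ D ∧
      RPQ P ρ (fun _ => 1 / (k : ℝ)) D = RofD P ρ D ∧
      ∃ l : ℝ, l < 0 ∧ HasDerivAt (Lam P ρ (fun _ => 1 / (k : ℝ))) D l ∧
        ((l * D - Lam P ρ (fun _ => 1 / (k : ℝ)) l : ℝ) : EReal)
          = (Real.log 2 : EReal) * RofD P ρ D ∧
        ∃ c : ℝ, ∀ i, ∑ j, (1 / (k : ℝ)) * Real.exp (l * ρ i j) = c := by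
  haveI : NeZero k := ⟨by omega⟩
  intro D hD0 hDlt
  have hk0 : (0:ℝ) < (k:ℝ) := by exact_mod_cast (by omega : 0 < k)
  have hkne : (k:ℝ) ≠ 0 := ne_of_gt hk0
  -- row invariance
  have hrowF : ∀ (F : ℝ → ℝ) (i : Fin k), ∑ j, F (ρ i j) = ∑ j, F (ρ 0 j) := by
    intro F i
    obtain ⟨σ, hσ⟩ := hperm 0 i
    rw [Finset.sum_congr rfl (fun j _ => by rw [hσ j])]
    exact Equiv.sum_comp σ (fun j => F (ρ 0 j))
  have hcolF : ∀ (F : ℝ → ℝ) (j : Fin k), ∑ i, F (ρ i j) = ∑ j', F (ρ 0 j') := by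
    intro F j
    rw [Finset.sum_congr rfl (fun i _ => by rw [hρsym i j])]
    exact hrowF F j
  -- the log-mgf of a single row
  set g : ℝ → ℝ := fun l => ∑ j, Real.exp (l * ρ 0 j) with hgdef
  set G : ℝ → ℝ := fun l => ∑ j, ρ 0 j * Real.exp (l * ρ 0 j) with hGdef
  have hgpos : ∀ l, 0 < g l :=
    fun l => Finset.sum_pos (fun j _ => Real.exp_pos _) ⟨0, Finset.mem_univ _⟩
  have hg1 : ∀ l, (1:ℝ) ≤ g l := by
    intro l
    have h00 : ρ 0 0 = 0 := (hρzero 0 0).mpr rfl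
    have := Finset.single_le_sum (f := fun j => Real.exp (l * ρ 0 j))
      (fun j _ => le_of_lt (Real.exp_pos _)) (Finset.mem_univ (0 : Fin k))
    simpa [h00] using this
  have hGnn : ∀ l, 0 ≤ G l :=
    fun l => Finset.sum_nonneg fun j _ => mul_nonneg (hρnn 0 j) (le_of_lt (Real.exp_pos _))
  -- Dmax identification
  have hDmaxval : Dmax P ρ = (∑ j, ρ 0 j) / k := by
    have hc : (fun j => ∑ i, P i * ρ i j) = fun _ : Fin k => (∑ j, ρ 0 j) / k := by
      funext j
      rw [Finset.sum_congr rfl (fun i _ => by rw [hunif i])]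
      have : ∑ i, 1 / (k:ℝ) * ρ i j = (1/(k:ℝ)) * ∑ i, ρ i j := by
        rw [Finset.mul_sum]
      rw [this]
      have h2 : ∑ i, ρ i j = ∑ j', ρ 0 j' := by
        simpa using hcolF (fun x => x) j
      rw [h2, one_div_mul_eq_div]
    rw [Dmax, hc, Set.range_const, csInf_singleton]
  -- existence of l* < 0 with G l / g l = D
  obtain ⟨l, hlneg, hlD⟩ : ∃ l : ℝ, l < 0 ∧ G l / g l = D := by
    have hgc : Continuous g := by
      simp only [hgdef]
      exact continuous_finset_sum _ fun j _ =>
        Real.continuous_exp.comp (continuous_id.mul continuous_const)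
    have hGc : Continuous G := by
      simp only [hGdef]
      exact continuous_finset_sum _ fun j _ =>
        continuous_const.mul (Real.continuous_exp.comp (continuous_id.mul continuous_const))
    have hφc : Continuous (fun x => G x / g x) := hGc.div hgc fun x => ne_of_gt (hgpos x)
    have hg0 : g 0 = k := by
      simp only [hgdef, zero_mul, Real.exp_zero]
      rw [Finset.sum_const, Finset.card_univ, Fintype.card_fin, nsmul_eq_mul, mul_one]
    have hG0 : G 0 = ∑ j, ρ 0 j := by
      simp only [hGdef, zero_mul, Real.exp_zero, mul_one]
    have hφ0 : G 0 / g 0 = Dmax P ρ := by rw [hDmaxval, hG0, hg0]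
    have hGtend : Filter.Tendsto G Filter.atBot (nhds 0) := by
      have hterm : ∀ j : Fin k,
          Filter.Tendsto (fun x => ρ 0 j * Real.exp (x * ρ 0 j)) Filter.atBot (nhds 0) := by
        intro j
        rcases eq_or_lt_of_le (hρnn 0 j) with h | h
        · simp [← h]
        · have h1 : Filter.Tendsto (fun x : ℝ => x * ρ 0 j) Filter.atBot Filter.atBot :=
            Filter.tendsto_id.atBot_mul_const h
          have h2 := Real.tendsto_exp_atBot.comp h1
          have h3 := h2.const_mul (ρ 0 j)
          simpa using h3
      have := tendsto_finset_sum Finset.univ fun j (_ : j ∈ Finset.univ) => hterm j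
      simpa [hGdef] using this
    obtain ⟨l0, hl0D, hl0neg⟩ : ∃ l0 : ℝ, G l0 < D ∧ l0 < 0 := by
      have h1 : ∀ᶠ x in Filter.atBot, G x < D := hGtend.eventually_lt_const hD0
      exact (h1.and (Filter.eventually_lt_atBot 0)).exists
    have hφl0 : G l0 / g l0 ≤ D :=
      le_of_lt (lt_of_le_of_lt (div_le_self (hGnn l0) (hg1 l0)) hl0D)
    have hsub := intermediate_value_Icc (le_of_lt hl0neg) (hφc.continuousOn :
      ContinuousOn (fun x => G x / g x) (Set.Icc l0 0))
    have hmem : D ∈ Set.Icc (G l0 / g l0) (G 0 / g 0) :=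
      ⟨hφl0, by rw [hφ0]; exact le_of_lt hDlt⟩
    obtain ⟨x, hx, hxval⟩ := hsub hmem
    refine ⟨x, ?_, hxval⟩
    rcases lt_or_eq_of_le hx.2 with h | h
    · exact h
    · exfalso
      rw [h] at hxval
      have hx2 : G 0 / g 0 = D := hxval
      rw [hφ0] at hx2
      linarith
  have hGg : G l = D * g l := by
    rw [div_eq_iff (ne_of_gt (hgpos l))] at hlD
    linarith [hlD]
  -- invariance at l
  have hginv : ∀ (l' : ℝ) (i : Fin k), ∑ j, Real.exp (l' * ρ i j) = g l' :=
    fun l' i => hrowF (fun x => Real.exp (l' * x)) i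
  have hGinv : ∀ i : Fin k, ∑ j, ρ i j * Real.exp (l * ρ i j) = G l :=
    fun i => hrowF (fun x => x * Real.exp (l * x)) i
  -- Lam for uniform Q
  have hLam : ∀ l' : ℝ, Lam P ρ (fun _ => 1 / (k:ℝ)) l' = Real.log (g l') - Real.log k := by
    intro l'
    unfold Lam
    have hin : ∀ i : Fin k, ∑ j, (1/(k:ℝ)) * Real.exp (l' * ρ i j) = g l' / k := by
      intro i
      rw [← Finset.mul_sum, hginv l' i]
      ring
    rw [Finset.sum_congr rfl fun i _ => by rw [hunif i, hin i]]
    rw [Finset.sum_const, Finset.card_univ, Fintype.card_fin, nsmul_eq_mul,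
      Real.log_div (ne_of_gt (hgpos l')) hkne]
    field_simp
  set A : ℝ := Real.log (g l) - Real.log k with hAdef
  set r : ℝ := (l * D - A) / Real.log 2 with hrdef
  have hlog2 : (0:ℝ) < Real.log 2 := Real.log_pos (by norm_num)
  -- the optimal W
  set W : Fin k → Fin k → ℝ := fun i j => Real.exp (l * ρ i j) / g l with hWdef
  have hWnn : ∀ i j, 0 ≤ W i j := by
    intro i j
    simp only [hWdef]
    exact div_nonneg (le_of_lt (Real.exp_pos _)) (le_of_lt (hgpos l))
  have hWrow : ∀ i, ∑ j, W i j = 1 := by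
    intro i
    simp only [hWdef]
    rw [← Finset.sum_div, hginv l i, div_self (ne_of_gt (hgpos l))]
  have hinner : ∀ i, ∑ j, P i * W i j * ρ i j = P i * D := by
    intro i
    have h1 : ∀ j, P i * W i j * ρ i j = (P i / g l) * (ρ i j * Real.exp (l * ρ i j)) := by
      intro j
      simp only [hWdef]
      ring
    have hgne : g l ≠ 0 := ne_of_gt (hgpos l)
    rw [Finset.sum_congr rfl fun j _ => h1 j, ← Finset.mul_sum, hGinv i, hGg]
    field_simp
  have hdist : ∑ i, ∑ j, P i * W i j * ρ i j = D := by
    rw [Finset.sum_congr rfl fun i _ => hinner i, ← Finset.sum_mul, hP.2, one_mul]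
  have hWmem : W ∈ {W : Fin k → Fin k → ℝ | (∀ i j, 0 ≤ W i j) ∧ (∀ i, ∑ j, W i j = 1) ∧
      ∑ i, ∑ j, P i * W i j * ρ i j ≤ D} := ⟨hWnn, hWrow, le_of_eq hdist⟩
  have hlogW : ∀ i j, Real.log (W i j / (1/(k:ℝ))) = l * ρ i j - A := by
    intro i j
    have h1 : W i j / (1/(k:ℝ)) = Real.exp (l * ρ i j) * ((k:ℝ) / g l) := by
      simp only [hWdef]
      field_simp
    rw [h1, Real.log_mul (ne_of_gt (Real.exp_pos _)) (ne_of_gt (div_pos hk0 (hgpos l))),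
      Real.log_exp,
      Real.log_div hkne (ne_of_gt (hgpos l)), hAdef]
    ring
  have e_i : ∀ i, ∑ j, (P i * W i j * (l * ρ i j) - P i * W i j * A) = P i * (l * D - A) := by
    intro i
    rw [Finset.sum_sub_distrib]
    have ea : ∑ j, P i * W i j * (l * ρ i j) = l * (P i * D) := by
      calc ∑ j, P i * W i j * (l * ρ i j) = ∑ j, l * (P i * W i j * ρ i j) :=
            Finset.sum_congr rfl fun j _ => by ring
        _ = l * (P i * D) := by rw [← Finset.mul_sum, hinner i]
    have eb : ∑ j, P i * W i j * A = P i * A := by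
      calc ∑ j, P i * W i j * A = ∑ j, W i j * (P i * A) :=
            Finset.sum_congr rfl fun j _ => by ring
        _ = P i * A := by rw [← Finset.sum_mul, hWrow i, one_mul]
    rw [ea, eb]
    ring
  have hsum_ln : ∑ i, ∑ j, P i * W i j * Real.logb 2 (W i j / (1/(k:ℝ))) = r := by
    calc ∑ i, ∑ j, P i * W i j * Real.logb 2 (W i j / (1/(k:ℝ)))
        = ∑ i, ∑ j, (P i * W i j * (l * ρ i j) - P i * W i j * A) / Real.log 2 :=
          Finset.sum_congr rfl fun i _ => Finset.sum_congr rfl fun j _ => by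
            rw [Real.logb, hlogW i j]
            ring
      _ = (∑ i, ∑ j, (P i * W i j * (l * ρ i j) - P i * W i j * A)) / Real.log 2 := by
          rw [Finset.sum_div]
          exact Finset.sum_congr rfl fun i _ => by rw [Finset.sum_div]
      _ = (∑ i, P i * (l * D - A)) / Real.log 2 := by
          rw [Finset.sum_congr rfl fun i _ => e_i i]
      _ = r := by rw [← Finset.sum_mul, hP.2, one_mul, hrdef]
  have hWcost : wCost P (fun _ => 1 / (k:ℝ)) W = ((r : ℝ) : EReal) := by
    unfold wCost
    rw [if_pos]
    · exact congrArg (fun x : ℝ => (x : EReal)) hsum_ln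
    · intro i j _
      positivity
  -- lower bound for every pmf Q
  have lower : ∀ Q : Fin k → ℝ, IsPmf Q → ((r:ℝ) : EReal) ≤ RPQ P ρ Q D := by
    intro Q hQ
    refine le_iInf₂ fun V hV => ?_
    obtain ⟨hVnn, hVrow, hVdist⟩ := hV
    unfold wCost
    split_ifs with hcond
    swap
    · exact le_top
    rw [EReal.coe_le_coe_iff]
    set t : Fin k → ℝ := fun i => ∑ j, Q j * Real.exp (l * ρ i j) with htdef
    have ht : ∀ i, 0 < t i := by
      intro i
      obtain ⟨j0, hj0⟩ : ∃ j, 0 < Q j := by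
        by_contra h
        push_neg at h
        have h2 : ∑ j, Q j ≤ 0 := Finset.sum_nonpos fun j _ => h j
        rw [hQ.2] at h2
        linarith
      exact Finset.sum_pos' (fun j _ => mul_nonneg (hQ.1 j) (le_of_lt (Real.exp_pos _)))
        ⟨j0, Finset.mem_univ _, mul_pos hj0 (Real.exp_pos _)⟩
    have hLamQ : Lam P ρ Q l = ∑ i, P i * Real.log (t i) := by
      simp only [Lam, htdef]
    -- per-row Gibbs bound
    have hrowbd : ∀ i, l * (∑ j, V i j * ρ i j) - Real.log (t i)
        ≤ ∑ j, V i j * Real.log (V i j / Q j) := by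
      intro i
      have hg2 := aux_gibbs (V i) (fun j => Q j * Real.exp (l * ρ i j)) (hVnn i) (hVrow i)
        (fun j hj => mul_pos (hcond i j hj) (Real.exp_pos _))
        (fun j => mul_nonneg (hQ.1 j) (le_of_lt (Real.exp_pos _))) (ht i)
      have hsplit : ∀ j, V i j * Real.log (V i j / (Q j * Real.exp (l * ρ i j)))
          = V i j * Real.log (V i j / Q j) - V i j * (l * ρ i j) := by
        intro j
        rcases eq_or_lt_of_le (hVnn i j) with h | h
        · rw [← h]
          simp
        · have hQj := hcond i j h
          have hd : V i j / (Q j * Real.exp (l * ρ i j))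
              = (V i j / Q j) / Real.exp (l * ρ i j) := (div_div _ _ _).symm
          rw [hd, Real.log_div (ne_of_gt (div_pos h hQj)) (ne_of_gt (Real.exp_pos _)),
            Real.log_exp]
          ring
      rw [Finset.sum_congr rfl fun j _ => hsplit j, Finset.sum_sub_distrib] at hg2
      have hl2 : ∑ j, V i j * (l * ρ i j) = l * ∑ j, V i j * ρ i j := by
        rw [Finset.mul_sum]
        exact Finset.sum_congr rfl fun j _ => by ring
      rw [hl2] at hg2
      linarith
    -- sum over rows
    have hmain : l * (∑ i, ∑ j, P i * V i j * ρ i j) - Lam P ρ Q l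
        ≤ ∑ i, ∑ j, P i * V i j * Real.log (V i j / Q j) := by
      have e1 : l * (∑ i, ∑ j, P i * V i j * ρ i j) - Lam P ρ Q l
          = ∑ i, P i * (l * (∑ j, V i j * ρ i j) - Real.log (t i)) := by
        rw [hLamQ, Finset.mul_sum, ← Finset.sum_sub_distrib]
        refine Finset.sum_congr rfl fun i _ => ?_
        have e2 : ∑ j, P i * V i j * ρ i j = P i * ∑ j, V i j * ρ i j := by
          rw [Finset.mul_sum]
          exact Finset.sum_congr rfl fun j _ => by ring
        rw [e2]
        ring
      have e3 : ∀ i, ∑ j, P i * V i j * Real.log (V i j / Q j)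
          = P i * ∑ j, V i j * Real.log (V i j / Q j) := by
        intro i
        rw [Finset.mul_sum]
        exact Finset.sum_congr rfl fun j _ => by ring
      rw [e1, Finset.sum_congr rfl fun i _ => e3 i]
      exact Finset.sum_le_sum fun i _ =>
        mul_le_mul_of_nonneg_left (hrowbd i) (le_of_lt (hPpos i))
    -- Jensen: Lam Q ≤ A
    have hL4 : Lam P ρ Q l ≤ A := by
      have hB : (0:ℝ) < g l / k := div_pos (hgpos l) hk0
      have hsumt : ∑ i, t i = g l := by
        simp only [htdef]
        rw [Finset.sum_comm]
        calc ∑ j, ∑ i, Q j * Real.exp (l * ρ i j) = ∑ j, Q j * g l := by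
              refine Finset.sum_congr rfl fun j _ => ?_
              rw [← Finset.mul_sum, hcolF (fun x => Real.exp (l * x)) j]
          _ = g l := by rw [← Finset.sum_mul, hQ.2, one_mul]
      have emid : ∑ i, (1/(k:ℝ)) * (Real.log (g l / k) + (t i / (g l / k) - 1))
          = Real.log (g l / k) := by
        have eterm : ∀ i : Fin k, (1/(k:ℝ)) * (Real.log (g l / k) + (t i / (g l / k) - 1))
            = (1/(k:ℝ)) * (Real.log (g l / k) - 1) + t i * (1/(g l)) := by
          intro i
          have hgne : g l ≠ 0 := ne_of_gt (hgpos l)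
          field_simp
          ring
        have hgne : g l ≠ 0 := ne_of_gt (hgpos l)
        rw [Finset.sum_congr rfl fun i _ => eterm i, Finset.sum_add_distrib, ← Finset.sum_mul,
          ← Finset.sum_mul, hsumt, Finset.sum_const, Finset.card_univ, Fintype.card_fin,
          nsmul_eq_mul]
        field_simp
        ring
      calc Lam P ρ Q l = ∑ i, (1/(k:ℝ)) * Real.log (t i) := by
            rw [hLamQ]
            exact Finset.sum_congr rfl fun i _ => by rw [hunif i]
        _ ≤ ∑ i, (1/(k:ℝ)) * (Real.log (g l / k) + (t i / (g l / k) - 1)) :=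
            Finset.sum_le_sum fun i _ =>
              mul_le_mul_of_nonneg_left (aux_log_le (ht i) hB) (by positivity)
        _ = Real.log (g l / k) := emid
        _ = A := by rw [Real.log_div (ne_of_gt (hgpos l)) hkne, hAdef]
    -- combine
    have hkey : l * D - A ≤ ∑ i, ∑ j, P i * V i j * Real.log (V i j / Q j) := by
      have h5 : l * D ≤ l * (∑ i, ∑ j, P i * V i j * ρ i j) :=
        mul_le_mul_of_nonpos_left hVdist (le_of_lt hlneg)
      linarith
    have hconv : ∑ i, ∑ j, P i * V i j * Real.logb 2 (V i j / Q j)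
        = (∑ i, ∑ j, P i * V i j * Real.log (V i j / Q j)) / Real.log 2 := by
      rw [Finset.sum_div]
      refine Finset.sum_congr rfl fun i _ => ?_
      rw [Finset.sum_div]
      refine Finset.sum_congr rfl fun j _ => ?_
      rw [Real.logb]
      ring
    rw [hconv, hrdef]
    gcongr
  have hQunif : IsPmf (fun _ : Fin k => 1 / (k:ℝ)) := by
    constructor
    · intro j; positivity
    · rw [Finset.sum_const, Finset.card_univ, Fintype.card_fin, nsmul_eq_mul]
      field_simp
  have hupper : RPQ P ρ (fun _ => 1 / (k:ℝ)) D ≤ ((r:ℝ) : EReal) := by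
    rw [← hWcost]
    exact iInf₂_le W hWmem
  have hR1 : RPQ P ρ (fun _ => 1 / (k:ℝ)) D = ((r:ℝ) : EReal) :=
    le_antisymm hupper (lower _ hQunif)
  have hR2 : RofD P ρ D = ((r:ℝ) : EReal) := by
    refine le_antisymm ?_ ?_
    · calc RofD P ρ D ≤ RPQ P ρ (fun _ => 1 / (k:ℝ)) D := iInf₂_le _ hQunif
        _ = _ := hR1
    · exact le_iInf₂ fun Q hQ => lower Q hQ
  have hderiv : HasDerivAt (Lam P ρ (fun _ => 1 / (k:ℝ))) D l := by
    have hgd : HasDerivAt g (G l) l := by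
      simp only [hgdef, hGdef]
      refine HasDerivAt.fun_sum fun j _ => ?_
      have h := ((hasDerivAt_id l).mul_const (ρ 0 j)).exp
      simp only [id_eq, one_mul] at h
      rw [show ρ 0 j * rexp (l * ρ 0 j) = rexp (l * ρ 0 j) * ρ 0 j from mul_comm _ _]
      exact h
    have hfun : Lam P ρ (fun _ : Fin k => 1 / (k:ℝ)) = fun x => Real.log (g x) - Real.log k :=
      funext hLam
    rw [hfun]
    have h2 := (hgd.log (ne_of_gt (hgpos l))).sub_const (Real.log k)
    rwa [hlD] at h2
  have hfinal : ((l * D - Lam P ρ (fun _ => 1 / (k:ℝ)) l : ℝ) : EReal)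
      = (Real.log 2 : EReal) * RofD P ρ D := by
    rw [hLam l, hR2, ← EReal.coe_mul]
    norm_cast
    rw [hrdef]
    field_simp
    rw [hAdef]
  have hconst : ∃ c : ℝ, ∀ i, ∑ j, (1 / (k : ℝ)) * Real.exp (l * ρ i j) = c := by
    refine ⟨g l / k, fun i => ?_⟩
    rw [← Finset.mul_sum, hginv l i]
    ring
  refine ⟨⟨fun _ => 1 / (k:ℝ), hQunif, hR1.trans hR2.symm, l, hlneg, hderiv, hfinal, hconst⟩,
    hR1.trans hR2.symm, l, hlneg, hderiv, hfinal, hconst⟩
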